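/- Let H be a finite graph (possibly with loops) on n vertices, and let c ≥ 2n be an integer. Then the independence number of the exponential graph satisfies α(E_c(H)) ≤ n·c^{n−1}. -/

import Mathlib

/-- Two maps `φ₁ φ₂ : V → C` are co-proper relative to an adjacency relation `Adj` on `V`
if `φ₁ u ≠ φ₂ v` whenever `u` is adjacent to `v`. Co-proper pairs of maps `V → Fin c` are
exactly the adjacent pairs of vertices in the exponential graph `E_c(H)`. -/
def CoProper {V C : Type*} (Adj : V → V → Prop) (φ₁ φ₂ : V → C) : Prop :=
  ∀ u v, Adj u v → φ₁ u ≠ φ₂ v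

open Finset

namespace ExpGraphAux

variable {V : Type*} [Fintype V] [DecidableEq V] {c : ℕ}

/-- The image of a map `V → Fin c` as a finset. -/
def img (φ : V → Fin c) : Finset (Fin c) := Finset.image φ Finset.univ

lemma mem_img {φ : V → Fin c} {x : Fin c} : x ∈ img φ ↔ ∃ v, φ v = x := by
  simp [img]

lemma img_card_le (φ : V → Fin c) : (img φ).card ≤ Fintype.card V := by
  classical
  calc (img φ).card ≤ (Finset.univ : Finset V).card := Finset.card_image_le
    _ = Fintype.card V := Finset.card_univ

/-- Number of maps `V → Fin c` with image exactly `U`. -/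
def gcard (V : Type*) [Fintype V] [DecidableEq V] {c : ℕ} (U : Finset (Fin c)) : ℕ :=
  ((Finset.univ : Finset (V → Fin c)).filter (fun φ => img φ = U)).card

/-- Counting maps with image inside `W`. -/
lemma card_into (W : Finset (Fin c)) :
    ((Finset.univ : Finset (V → Fin c)).filter (fun φ => img φ ⊆ W)).card
      = W.card ^ Fintype.card V := by
  rw [← Fintype.card_coe W, ← Fintype.card_fun, ← Fintype.card_subtype]
  refine Fintype.card_congr ?_
  refine
    { toFun := fun φ v => ⟨φ.1 v, φ.2 (Finset.mem_image_of_mem φ.1 (Finset.mem_univ v))⟩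
      invFun := fun f => ⟨fun v => (f v).1, fun x hx => ?_⟩
      left_inv := fun φ => rfl
      right_inv := fun f => rfl }
  obtain ⟨v, -, rfl⟩ := Finset.mem_image.1 hx
  exact (f v).2

lemma gcard_le_of_card_eq {U U' : Finset (Fin c)} (h : U.card = U'.card) :
    gcard V U ≤ gcard V U' := by
  have h2 : Fintype.card {x : Fin c // x ∈ U} = Fintype.card {x : Fin c // x ∈ U'} := by
    simpa using h
  have h3 : Fintype.card {x : Fin c // ¬ x ∈ U} = Fintype.card {x : Fin c // ¬ x ∈ U'} := by
    rw [Fintype.card_subtype_compl, Fintype.card_subtype_compl, h2]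
  set e := Fintype.equivOfCardEq h2 with he
  set σ : Equiv.Perm (Fin c) := Equiv.subtypeCongr e (Fintype.equivOfCardEq h3) with hσdef
  have hσ : ∀ x ∈ U, σ x ∈ U' := by
    intro x hx
    have hx' : σ x = (e ⟨x, hx⟩ : Fin c) := by
      simp [hσdef, Equiv.subtypeCongr, hx]
    rw [hx']
    exact (e ⟨x, hx⟩).2
  have himg : U.image σ = U' := by
    apply Finset.eq_of_subset_of_card_le
    · intro y hy
      obtain ⟨x, hx, rfl⟩ := Finset.mem_image.1 hy
      exact hσ x hx
    · rw [Finset.card_image_of_injective _ σ.injective]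
      exact h.ge
  apply Finset.card_le_card_of_injOn (fun φ => σ ∘ φ)
  · intro φ hφ
    simp only [Finset.mem_coe, Finset.mem_filter, Finset.mem_univ, true_and] at hφ ⊢
    have : img (σ ∘ φ) = (img φ).image σ := by
      simp [img, Finset.image_image]
    rw [this, hφ, himg]
  · intro φ _ ψ _ hfe
    funext v
    exact σ.injective (congrFun hfe v)

lemma gcard_eq_of_card_eq {U U' : Finset (Fin c)} (h : U.card = U'.card) :
    gcard V U = gcard V U' :=
  le_antisymm (gcard_le_of_card_eq h) (gcard_le_of_card_eq h.symm)

lemma star_layer_count (a₀ : Fin c) {j : ℕ} (hj : 1 ≤ j) :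
    (c - 1).choose (j - 1) ≤
      (((Finset.univ : Finset (Fin c)).powerset.filter (fun U => a₀ ∈ U)).filter
        (fun U => U.card = j)).card := by
  have hcard : ((Finset.univ.erase a₀).powersetCard (j - 1)).card = (c - 1).choose (j - 1) := by
    rw [Finset.card_powersetCard, Finset.card_erase_of_mem (Finset.mem_univ _),
      Finset.card_univ, Fintype.card_fin]
  rw [← hcard]
  apply Finset.card_le_card_of_injOn (fun W => insert a₀ W)
  · intro W hW
    rw [Finset.mem_coe, Finset.mem_powersetCard] at hW
    obtain ⟨hWsub, hWcard⟩ := hW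
    have ha : a₀ ∉ W := fun h => (Finset.mem_erase.1 (hWsub h)).1 rfl
    simp only [Finset.mem_coe, Finset.mem_filter, Finset.mem_powerset]
    refine ⟨⟨Finset.subset_univ _, Finset.mem_insert_self _ _⟩, ?_⟩
    rw [Finset.card_insert_of_notMem ha, hWcard]
    omega
  · intro W hW W' hW' hins
    rw [Finset.mem_coe, Finset.mem_powersetCard] at hW hW'
    have haW : a₀ ∉ W := fun hh => (Finset.mem_erase.1 (hW.1 hh)).1 rfl
    have haW' : a₀ ∉ W' := fun hh => (Finset.mem_erase.1 (hW'.1 hh)).1 rfl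
    calc W = (insert a₀ W).erase a₀ := (Finset.erase_insert haW).symm
      _ = (insert a₀ W').erase a₀ := congrArg (fun s => Finset.erase s a₀) hins
      _ = W' := Finset.erase_insert haW'

lemma pow_ineq (c : ℕ) : ∀ n : ℕ, c ^ n ≤ (c - 1) ^ n + n * c ^ (n - 1)
  | 0 => by simp
  | 1 => by
    rcases c with _ | k
    · simp
    · simp
  | (n + 2) => by
    have ih := pow_ineq c (n + 1)
    simp only [Nat.add_sub_cancel] at ih ⊢
    have step1 : c ^ (n + 2) ≤ c * ((c - 1) ^ (n + 1) + (n + 1) * c ^ n) := by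
      calc c ^ (n + 2) = c * c ^ (n + 1) := by ring
        _ ≤ _ := Nat.mul_le_mul_left _ ih
    have step2 : c * (c - 1) ^ (n + 1) ≤ (c - 1) ^ (n + 2) + c ^ (n + 1) := by
      rcases c with _ | k
      · simp
      · simp only [Nat.succ_sub_one]
        have hk : k ^ (n + 1) ≤ (k + 1) ^ (n + 1) := Nat.pow_le_pow_left (by omega) _
        calc (k + 1) * k ^ (n + 1) = k ^ (n + 2) + k ^ (n + 1) := by ring
          _ ≤ k ^ (n + 2) + (k + 1) ^ (n + 1) := by omega
    calc c ^ (n + 2) ≤ c * ((c - 1) ^ (n + 1) + (n + 1) * c ^ n) := step1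
      _ = c * (c - 1) ^ (n + 1) + (n + 1) * (c * c ^ n) := by ring
      _ = c * (c - 1) ^ (n + 1) + (n + 1) * c ^ (n + 1) := by ring
      _ ≤ ((c - 1) ^ (n + 2) + c ^ (n + 1)) + (n + 1) * c ^ (n + 1) := by omega
      _ = (c - 1) ^ (n + 2) + (n + 2) * c ^ (n + 1) := by ring

end ExpGraphAux

open ExpGraphAux

theorem exp_graph_independence_aux {V : Type*} [Fintype V] [DecidableEq V]
    (Adj : V → V → Prop) (c : ℕ)
    (hc : 2 * Fintype.card V ≤ c)
    (S : Finset (V → Fin c))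
    (hS : ∀ φ₁ ∈ S, ∀ φ₂ ∈ S, ¬ CoProper Adj φ₁ φ₂) :
    S.card ≤ Fintype.card V * c ^ (Fintype.card V - 1) := by
  set n := Fintype.card V with hn
  -- dispose of the empty-vertex case
  rcases Nat.eq_zero_or_pos n with hn0 | hn1
  · have hV : IsEmpty V := Fintype.card_eq_zero_iff.1 hn0
    have : S = ∅ := by
      rcases Finset.eq_empty_or_nonempty S with h | ⟨φ, hφ⟩
      · exact h
      · exact absurd (fun u v _ => (hV.false u).elim) (hS φ hφ φ hφ)
    simp [this]
  have hc2 : 2 ≤ c := le_trans (by omega) hc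
  have hc0 : 0 < c := by omega
  set a₀ : Fin c := ⟨0, hc0⟩ with ha₀
  -- the family of images
  set 𝒰 : Finset (Finset (Fin c)) := S.image img with h𝒰
  -- every image is nonempty and of size ≤ n, and the family is intersecting
  have hmemcard : ∀ U ∈ 𝒰, 1 ≤ U.card ∧ U.card ≤ n := by
    intro U hU
    obtain ⟨φ, -, rfl⟩ := Finset.mem_image.1 hU
    constructor
    · have : (img φ).Nonempty := by
        obtain ⟨v⟩ := Fintype.card_pos_iff.1 (hn ▸ hn1)
        exact ⟨φ v, mem_img.2 ⟨v, rfl⟩⟩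
      exact Finset.card_pos.2 this
    · exact img_card_le φ
  have hinter : ∀ U ∈ 𝒰, ∀ U' ∈ 𝒰, ¬ Disjoint U U' := by
    intro U hU U' hU'
    obtain ⟨φ, hφ, rfl⟩ := Finset.mem_image.1 hU
    obtain ⟨ψ, hψ, rfl⟩ := Finset.mem_image.1 hU'
    have := hS φ hφ ψ hψ
    rw [CoProper] at this
    push_neg at this
    obtain ⟨u, v, -, huv⟩ := this
    exact Finset.not_disjoint_iff.2 ⟨φ u, mem_img.2 ⟨u, rfl⟩, mem_img.2 ⟨v, huv.symm⟩⟩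
  -- Step 1: |S| ≤ ∑_{U ∈ 𝒰} gcard U
  have step1 : S.card ≤ ∑ U ∈ 𝒰, gcard V U := by
    rw [Finset.card_eq_sum_card_fiberwise
      (f := fun φ => img φ) (t := 𝒰) (fun φ hφ => Finset.mem_image_of_mem _ hφ)]
    apply Finset.sum_le_sum
    intro U hU
    exact Finset.card_le_card (Finset.filter_subset_filter _ (Finset.subset_univ S))
  -- the star family
  set star : Finset (Finset (Fin c)) :=
    (Finset.univ : Finset (Fin c)).powerset.filter (fun U => a₀ ∈ U) with hstar
  -- Step 2: ∑_{U ∈ 𝒰} gcard U ≤ ∑_{U ∈ star} gcard U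
  have step2 : ∑ U ∈ 𝒰, gcard V U ≤ ∑ U ∈ star, gcard V U := by
    have hmap𝒰 : ∀ U ∈ 𝒰, U.card ∈ Finset.range (n + 1) := by
      intro U hU
      exact Finset.mem_range.2 (by have := (hmemcard U hU).2; omega)
    rw [← Finset.sum_fiberwise_of_maps_to hmap𝒰 (gcard V)]
    have hsplit : ∑ U ∈ star.filter (fun U => U.card ≤ n), gcard V U ≤ ∑ U ∈ star, gcard V U :=
      Finset.sum_le_sum_of_subset (Finset.filter_subset _ _)
    refine le_trans ?_ hsplit
    have hmapstar : ∀ U ∈ star.filter (fun U => U.card ≤ n), U.card ∈ Finset.range (n + 1) := by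
      intro U hU
      exact Finset.mem_range.2 (by have := (Finset.mem_filter.1 hU).2; omega)
    rw [← Finset.sum_fiberwise_of_maps_to hmapstar (gcard V)]
    apply Finset.sum_le_sum
    intro j hj
    -- layer-wise comparison
    rcases Finset.eq_empty_or_nonempty (𝒰.filter (fun U => U.card = j)) with hje | ⟨U₀, hU₀⟩
    · rw [hje, Finset.sum_empty]
      exact Nat.zero_le _
    have hU₀' := Finset.mem_filter.1 hU₀
    have hU₀𝒰 : U₀ ∈ 𝒰 := hU₀'.1
    have hU₀card : U₀.card = j := hU₀'.2
    have hj1 : 1 ≤ j := hU₀card ▸ (hmemcard U₀ hU₀𝒰).1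
    have hjn : j ≤ n := hU₀card ▸ (hmemcard U₀ hU₀𝒰).2
    have hLHS : ∑ U ∈ 𝒰.filter (fun U => U.card = j), gcard V U
        = (𝒰.filter (fun U => U.card = j)).card * gcard V U₀ := by
      rw [Finset.sum_congr rfl (fun U hU => gcard_eq_of_card_eq
        (((Finset.mem_filter.1 hU).2).trans hU₀card.symm))]
      rw [Finset.sum_const, smul_eq_mul]
    have hRHS : ∑ U ∈ (star.filter (fun U => U.card ≤ n)).filter (fun U => U.card = j), gcard V U
        = ((star.filter (fun U => U.card ≤ n)).filter (fun U => U.card = j)).card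
            * gcard V U₀ := by
      rw [Finset.sum_congr rfl (fun U hU => gcard_eq_of_card_eq
        (((Finset.mem_filter.1 hU).2).trans hU₀card.symm))]
      rw [Finset.sum_const, smul_eq_mul]
    rw [hLHS, hRHS]
    apply Nat.mul_le_mul_right
    -- EKR bound on the layer
    have hEKR : (𝒰.filter (fun U => U.card = j)).card ≤ (c - 1).choose (j - 1) := by
      apply Finset.erdos_ko_rado
      · intro U hU U' hU'
        rw [Finset.mem_coe, Finset.mem_filter] at hU hU'
        exact hinter U hU.1 U' hU'.1
      · intro U hU
        rw [Finset.mem_coe, Finset.mem_filter] at hU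
        exact hU.2
      · rw [Nat.le_div_iff_mul_le (by omega)]
        omega
    refine le_trans hEKR (le_trans (star_layer_count a₀ hj1) ?_)
    -- star layer j sits inside (star.filter (card ≤ n)).filter (card = j)
    apply Finset.card_le_card
    intro U hU
    rw [Finset.mem_filter] at hU
    rw [Finset.mem_filter, Finset.mem_filter]
    exact ⟨⟨hU.1, by omega⟩, hU.2⟩
  -- Step 3: ∑_{U ∈ star} gcard U + (c-1)^n = c^n
  have step3 : (∑ U ∈ star, gcard V U) + (c - 1) ^ n = c ^ n := by
    have htotal : ∑ U ∈ (Finset.univ : Finset (Fin c)).powerset, gcard V U = c ^ n := by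
      have h := Finset.card_eq_sum_card_fiberwise
        (f := (img : (V → Fin c) → Finset (Fin c)))
        (s := (Finset.univ : Finset (V → Fin c)))
        (t := (Finset.univ : Finset (Fin c)).powerset)
        (fun φ _ => Finset.mem_powerset.2 (Finset.subset_univ _))
      simp only [gcard]
      rw [← h, Finset.card_univ, Fintype.card_fun, Fintype.card_fin]
    have hsplit := Finset.sum_filter_add_sum_filter_not
      ((Finset.univ : Finset (Fin c)).powerset) (fun U => a₀ ∈ U) (gcard V)
    have hmiss : ∑ U ∈ (Finset.univ : Finset (Fin c)).powerset.filter (fun U => a₀ ∉ U),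
        gcard V U = (c - 1) ^ n := by
      have hfib := Finset.card_eq_sum_card_fiberwise
        (f := (img : (V → Fin c) → Finset (Fin c)))
        (s := (Finset.univ : Finset (V → Fin c)).filter
          (fun φ => img φ ⊆ Finset.univ.erase a₀))
        (t := (Finset.univ : Finset (Fin c)).powerset.filter (fun U => a₀ ∉ U))
        (fun φ hφ => by
          have hφ2 := (Finset.mem_filter.1 hφ).2
          rw [Finset.mem_coe, Finset.mem_filter, Finset.mem_powerset]
          refine ⟨Finset.subset_univ _, fun ha => ?_⟩
          exact (Finset.mem_erase.1 (hφ2 ha)).1 rfl)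
      have hfibs : ∀ U ∈ (Finset.univ : Finset (Fin c)).powerset.filter (fun U => a₀ ∉ U),
          (((Finset.univ : Finset (V → Fin c)).filter
            (fun φ => img φ ⊆ Finset.univ.erase a₀)).filter (fun φ => img φ = U)).card
          = gcard V U := by
        intro U hU
        rw [Finset.mem_filter, Finset.mem_powerset] at hU
        unfold gcard
        congr 1
        rw [Finset.filter_filter]
        apply Finset.filter_congr
        intro φ _
        constructor
        · rintro ⟨-, h⟩; exact h
        · rintro h
          refine ⟨?_, h⟩
          rw [h]
          exact Finset.subset_erase.2 ⟨hU.1, hU.2⟩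
      rw [Finset.sum_congr rfl hfibs] at hfib
      rw [← hfib, card_into, Finset.card_erase_of_mem (Finset.mem_univ _),
        Finset.card_univ, Fintype.card_fin]
    rw [hmiss] at hsplit
    rw [← htotal, ← hsplit]
  -- finish
  have hfin := pow_ineq c n
  have : S.card + (c - 1) ^ n ≤ c ^ n := by
    rw [← step3]
    exact Nat.add_le_add_right (le_trans step1 step2) _
  omega

theorem exp_graph_independence {V : Type*} [Fintype V]
    (Adj : V → V → Prop) (hsymm : Symmetric Adj) (c : ℕ)
    (hc : 2 * Fintype.card V ≤ c)
    (S : Finset (V → Fin c))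
    (hS : ∀ φ₁ ∈ S, ∀ φ₂ ∈ S, ¬ CoProper Adj φ₁ φ₂) :
    S.card ≤ Fintype.card V * c ^ (Fintype.card V - 1) := by
  classical
  exact exp_graph_independence_aux Adj c hc S hS
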